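/- arXiv:2001.02586 — 3 statements merged into one kernel-verified Lean document; each statement's English description precedes it below -/
import Mathlib

section
/- Let N ≥ 1 and let q₁, q₂ be positive integers with q₂ ∣ q₁ and q₁ ∣ N. Then there exists a divisor d of N such that q₁ = N/gcd(d, N/d) and q₂ = (N/d)/gcd(d, N/d) if and only if for every prime p dividing N, either v_p(N/q₁) = v_p(q₁/q₂), or both v_p(N/q₁) ≤ v_p(q₁/q₂) and v_p(q₂) = 0, where v_p denotes the p-adic valuation. -/
/-- Let `N ≥ 1` and let `q₁, q₂` be positive integers with `q₂ ∣ q₁`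
and `q₁ ∣ N`.  Then there exists a divisor `d` of `N` with `q₁ = N/gcd(d, N/d)` and
`q₂ = (N/d)/gcd(d, N/d)` if and only if for every prime `p` dividing `N`, either
`v_p(N/q₁) = v_p(q₁/q₂)`, or both `v_p(N/q₁) ≤ v_p(q₁/q₂)` and `v_p(q₂) = 0`. -/
theorem statement13 (N q₁ q₂ : ℕ) (hN : 0 < N) (hq₁ : 0 < q₁) (hq₂ : 0 < q₂)
    (h21 : q₂ ∣ q₁) (h1N : q₁ ∣ N) :
    (∃ d : ℕ, d ∣ N ∧ q₁ = N / Nat.gcd d (N / d) ∧ q₂ = (N / d) / Nat.gcd d (N / d)) ↔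
      ∀ p : ℕ, p.Prime → p ∣ N →
        ((N / q₁).factorization p = (q₁ / q₂).factorization p ∨
          ((N / q₁).factorization p ≤ (q₁ / q₂).factorization p ∧
            q₂.factorization p = 0)) := by
  have hN0 : N ≠ 0 := hN.ne'
  constructor
  · rintro ⟨d, hdN, hq1, hq2⟩ p hp hpN
    have hd0 : d ≠ 0 := by
      rintro rfl
      simp at hq1
      omega
    have hNd0 : N / d ≠ 0 := Nat.div_ne_zero_iff_of_dvd hdN |>.mpr ⟨hN0, hd0⟩
    set g := Nat.gcd d (N / d) with hg
    have hgd : g ∣ d := Nat.gcd_dvd_left _ _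
    have hgNd : g ∣ N / d := Nat.gcd_dvd_right _ _
    have hgN : g ∣ N := hgd.trans hdN
    have hNq1 : N / q₁ = g := by rw [hq1, Nat.div_div_self hgN hN0]
    have hfg : g.factorization = d.factorization ⊓ (N / d).factorization :=
      Nat.factorization_gcd hd0 hNd0
    have hfNd : (N / d).factorization = N.factorization - d.factorization :=
      Nat.factorization_div hdN
    have hfq1 : q₁.factorization = N.factorization - g.factorization := by
      rw [hq1]; exact Nat.factorization_div hgN
    have hfq2 : q₂.factorization = (N / d).factorization - g.factorization := by
      rw [hq2]; exact Nat.factorization_div hgNd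
    have hfq12 : (q₁ / q₂).factorization = q₁.factorization - q₂.factorization :=
      Nat.factorization_div h21
    have haN : d.factorization p ≤ N.factorization p :=
      (Nat.factorization_le_iff_dvd hd0 hN0).mpr hdN p
    set n := N.factorization p
    set a := d.factorization p
    rw [hNq1, hfq12, Finsupp.tsub_apply, hfq1, hfq2, hfg, hfNd]
    simp only [Finsupp.inf_apply, Finsupp.tsub_apply]
    omega
  · intro h
    set d := q₁ / q₂ with hd
    have hdq1 : d ∣ q₁ := Nat.div_dvd_of_dvd h21
    have hdN : d ∣ N := hdq1.trans h1N
    have hd0 : d ≠ 0 := (Nat.div_pos (Nat.le_of_dvd hq₁ h21) hq₂).ne'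
    have hNd0 : N / d ≠ 0 := Nat.div_ne_zero_iff_of_dvd hdN |>.mpr ⟨hN0, hd0⟩
    set g := Nat.gcd d (N / d) with hg
    have hgd : g ∣ d := Nat.gcd_dvd_left _ _
    have hgNd : g ∣ N / d := Nat.gcd_dvd_right _ _
    have hgN : g ∣ N := hgd.trans hdN
    have hg0 : g ≠ 0 := Nat.gcd_ne_zero_left hd0
    have hfg : g.factorization = d.factorization ⊓ (N / d).factorization :=
      Nat.factorization_gcd hd0 hNd0
    have hfNd : (N / d).factorization = N.factorization - d.factorization :=
      Nat.factorization_div hdN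
    have hfd : d.factorization = q₁.factorization - q₂.factorization :=
      Nat.factorization_div h21
    have key : ∀ p : ℕ, p.Prime →
        (N.factorization p - q₁.factorization p = q₁.factorization p - q₂.factorization p ∨
          (N.factorization p - q₁.factorization p ≤ q₁.factorization p - q₂.factorization p ∧
            q₂.factorization p = 0)) ∧
        q₂.factorization p ≤ q₁.factorization p ∧ q₁.factorization p ≤ N.factorization p := by
      intro p hp
      refine ⟨?_, (Nat.factorization_le_iff_dvd hq₂.ne' hq₁.ne').mpr h21 p,
        (Nat.factorization_le_iff_dvd hq₁.ne' hN0).mpr h1N p⟩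
      by_cases hpN : p ∣ N
      · have := h p hp hpN
        rwa [Nat.factorization_div h1N, Nat.factorization_div h21,
          Finsupp.tsub_apply, Finsupp.tsub_apply] at this
      · have h1 : N.factorization p = 0 := Nat.factorization_eq_zero_of_not_dvd hpN
        have h2 : q₂.factorization p = 0 := Nat.factorization_eq_zero_of_not_dvd
          (fun hc => hpN (hc.trans (h21.trans h1N)))
        have h3 : q₁.factorization p = 0 := Nat.factorization_eq_zero_of_not_dvd
          (fun hc => hpN (hc.trans h1N))
        simp [h1, h2, h3]
    refine ⟨d, hdN, ?_, ?_⟩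
    · apply Nat.eq_of_factorization_eq hq₁.ne'
        (Nat.div_ne_zero_iff_of_dvd hgN |>.mpr ⟨hN0, hg0⟩)
      intro p
      rw [Nat.factorization_div hgN]
      by_cases hp : p.Prime
      · have := key p hp
        simp only [Finsupp.tsub_apply, hfg, Finsupp.inf_apply, hfNd, hfd,
          Finsupp.tsub_apply] at this ⊢
        omega
      · simp [Nat.factorization_eq_zero_of_not_prime _ hp]
    · apply Nat.eq_of_factorization_eq hq₂.ne'
        (Nat.div_ne_zero_iff_of_dvd hgNd |>.mpr ⟨hNd0, hg0⟩)
      intro p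
      rw [Nat.factorization_div hgNd]
      by_cases hp : p.Prime
      · have := key p hp
        simp only [Finsupp.tsub_apply, hfg, Finsupp.inf_apply, hfNd, hfd,
          Finsupp.tsub_apply] at this ⊢
        omega
      · simp [Nat.factorization_eq_zero_of_not_prime _ hp]
end

section
/- Let g : ℤ/Nℤ → ℂ and let h ≥ 2 be an integer. Then N·L(1−h, g) = C_{N,h}^{−1}·L(h, ĝ + (−1)^h·ĝ⁻), and L(1−h, g) = (−1)^h·L(1−h, g⁻). -/
noncomputable section

open Filter Complex

/-- The additive character `x ↦ exp(2πi·x/N)` of `ℤ/Nℤ`. -/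
def eChar (N : ℕ) [NeZero N] (x : ZMod N) : ℂ :=
  Complex.exp (2 * (Real.pi : ℂ) * Complex.I * (x.val : ℂ) / (N : ℂ))

/-- The Fourier transform `ĝ(n) = Σ_{a ∈ ℤ/Nℤ} g(a)·exp(-2πi·a·n/N)` of a function on
`ℤ/Nℤ`. -/
def fhat (N : ℕ) [NeZero N] (g : ZMod N → ℂ) : ZMod N → ℂ :=
  fun n => ∑ a : ZMod N, g a * eChar N (-(a * n))

/-- The constant `C_{N,h} = (-2πi)^h/(N^h·(h-1)!)`. -/
def CN (N : ℕ) (h : ℕ) : ℂ :=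
  (-(2 * (Real.pi : ℂ) * Complex.I)) ^ h / ((N : ℂ) ^ h * (Nat.factorial (h - 1) : ℂ))

/-- `L` is the meromorphically continued `L`-function of functions on `ℤ/Nℤ`:
for each `g`, `L g` agrees with the (absolutely convergent) Dirichlet series
`Σ_{n ≥ 1} g(n mod N)·n^{-s}` on `Re(s) > 1`, is differentiable away from `s = 1`,
and has at most a simple pole at `s = 1` with residue `ĝ(0)/N`. -/
def IsLSeries (N : ℕ) [NeZero N] (L : (ZMod N → ℂ) → ℂ → ℂ) : Prop :=
  (∀ (g : ZMod N → ℂ) (s : ℂ), 1 < s.re →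
      HasSum (fun n : ℕ => g ((n + 1 : ℕ) : ZMod N) * ((n + 1 : ℕ) : ℂ) ^ (-s)) (L g s)) ∧
  (∀ (g : ZMod N → ℂ) (s : ℂ), s ≠ 1 → DifferentiableAt ℂ (L g) s) ∧
  (∀ g : ZMod N → ℂ,
      Tendsto (fun s : ℂ => (s - 1) * L g s) (nhdsWithin 1 {(1 : ℂ)}ᶜ)
        (nhds (fhat N g 0 / (N : ℂ))))

lemma eChar_eq {N : ℕ} [NeZero N] (x : ZMod N) : eChar N x = ZMod.stdAddChar x := by
  have h1 : (((x.val : ℤ) : ZMod N)) = x := by push_cast [ZMod.natCast_zmod_val]; rfl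
  conv_rhs => rw [← h1]
  rw [ZMod.stdAddChar_coe, eChar]
  norm_num

lemma fhat_eq {N : ℕ} [NeZero N] (g : ZMod N → ℂ) : fhat N g = ZMod.dft g := by
  funext k
  rw [fhat, ZMod.dft_apply]
  exact Finset.sum_congr rfl fun a _ => by rw [eChar_eq, smul_eq_mul, mul_comm]

lemma L_eq {N : ℕ} [NeZero N] {L : (ZMod N → ℂ) → ℂ → ℂ} (hL : IsLSeries N L)
    (g : ZMod N → ℂ) {s : ℂ} (hs : s ≠ 1) : L g s = ZMod.LFunction g s := by
  have hU : IsOpen ({(1 : ℂ)}ᶜ : Set ℂ) := isOpen_compl_singleton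
  have hpre : IsPreconnected ({(1 : ℂ)}ᶜ : Set ℂ) :=
    (isConnected_compl_singleton_of_one_lt_rank
      (by rw [rank_real_complex]; norm_num) 1).isPreconnected
  have hf : AnalyticOnNhd ℂ (L g) ({(1 : ℂ)}ᶜ : Set ℂ) :=
    DifferentiableOn.analyticOnNhd
      (fun z hz => (hL.2.1 g z hz).differentiableWithinAt) hU
  have hg : AnalyticOnNhd ℂ (ZMod.LFunction g) ({(1 : ℂ)}ᶜ : Set ℂ) :=
    DifferentiableOn.analyticOnNhd
      (fun z hz => (ZMod.differentiableAt_LFunction g z (Or.inl hz)).differentiableWithinAt) hU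
  have h2 : (2 : ℂ) ∈ ({(1 : ℂ)}ᶜ : Set ℂ) := by norm_num
  have hev : L g =ᶠ[nhds (2 : ℂ)] ZMod.LFunction g := by
    have hop : IsOpen {z : ℂ | 1 < z.re} := continuous_re.isOpen_preimage _ isOpen_Ioi
    filter_upwards [hop.mem_nhds (by norm_num : (1 : ℝ) < (2 : ℂ).re)] with z hz
    have hsum := hL.1 g z hz
    have hsummable : Summable (LSeries.term (g ·) z) := ZMod.LSeriesSummable_of_one_lt_re g hz
    rw [ZMod.LFunction_eq_LSeries _ hz, ← hsum.tsum_eq, LSeries,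
      Summable.tsum_eq_zero_add hsummable, LSeries.term_zero, zero_add]
    congr 1
    funext n
    rw [LSeries.term_of_ne_zero (Nat.succ_ne_zero n)]
    rw [cpow_neg]
    push_cast
    ring
  exact hf.eqOn_of_preconnected_of_eventuallyEq hg hpre h2 hev hs

lemma LFunction_add_smul {N : ℕ} [NeZero N] (Φ Ψ : ZMod N → ℂ) (c s : ℂ) :
    ZMod.LFunction (fun x => Φ x + c * Ψ x) s
      = ZMod.LFunction Φ s + c * ZMod.LFunction Ψ s := by
  simp only [ZMod.LFunction, add_mul, Finset.sum_add_distrib, mul_add, Finset.mul_sum]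
  congr 1
  refine Finset.sum_congr rfl fun j _ => by ring

lemma exp_pi_I_nat (h : ℕ) :
    Complex.exp ((Real.pi : ℂ) * I * h / 2) = I ^ h ∧
    Complex.exp (-(Real.pi : ℂ) * I * h / 2) = (-1 : ℂ) ^ h * I ^ h := by
  have base : Complex.exp ((Real.pi : ℂ) / 2 * I) = I := by
    rw [Complex.exp_mul_I,
      show ((Real.pi : ℂ) / 2) = ((Real.pi / 2 : ℝ) : ℂ) by push_cast; ring,
      ← Complex.ofReal_cos, ← Complex.ofReal_sin, Real.cos_pi_div_two, Real.sin_pi_div_two]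
    simp
  have base' : Complex.exp (-((Real.pi : ℂ) / 2) * I) = -I := by
    rw [Complex.exp_mul_I,
      show (-((Real.pi : ℂ) / 2)) = ((-(Real.pi / 2) : ℝ) : ℂ) by push_cast; ring,
      ← Complex.ofReal_cos, ← Complex.ofReal_sin, Real.cos_neg, Real.sin_neg,
      Real.cos_pi_div_two, Real.sin_pi_div_two]
    simp
  constructor
  · rw [show (Real.pi : ℂ) * I * h / 2 = h * ((Real.pi : ℂ) / 2 * I) by ring,
      Complex.exp_nat_mul, base]
  · rw [show -(Real.pi : ℂ) * I * h / 2 = h * (-((Real.pi : ℂ) / 2) * I) by ring,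
      Complex.exp_nat_mul, base']
    rw [neg_pow]

lemma LF_one_sub {N : ℕ} [NeZero N] (g : ZMod N → ℂ) {h : ℕ} (hh : 2 ≤ h) :
    ZMod.LFunction g (1 - (h : ℂ))
      = (N : ℂ) ^ (h - 1 : ℕ) * (((2 * (Real.pi : ℂ)) ^ h)⁻¹) * (Nat.factorial (h - 1) : ℂ) *
        (I ^ h * ZMod.LFunction (ZMod.dft g) (h : ℂ)
          + (-1 : ℂ) ^ h * I ^ h * ZMod.LFunction (ZMod.dft fun x => g (-x)) (h : ℂ)) := by
  have hs : ∀ n : ℕ, (h : ℂ) ≠ -(n : ℂ) := by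
    intro n hn
    have := congrArg Complex.re hn
    simp only [natCast_re, neg_re] at this
    have hn0 : (0 : ℝ) ≤ (n : ℝ) := Nat.cast_nonneg n
    have h2 : (2 : ℝ) ≤ (h : ℝ) := by exact_mod_cast hh
    linarith
  have hs' : (h : ℂ) ≠ 1 := by
    intro hc
    have : (h : ℂ) = ((1 : ℕ) : ℂ) := by simpa using hc
    have := Nat.cast_injective this
    omega
  rw [ZMod.LFunction_one_sub g hs (Or.inr hs')]
  rw [(exp_pi_I_nat h).1, (exp_pi_I_nat h).2]
  have hNpow : (N : ℂ) ^ ((h : ℂ) - 1) = (N : ℂ) ^ (h - 1 : ℕ) := by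
    rw [show ((h : ℂ) - 1) = ((h - 1 : ℕ) : ℂ) by push_cast [Nat.cast_sub (by omega : 1 ≤ h)]; ring]
    rw [cpow_natCast]
  have h2pow : (2 * (Real.pi : ℂ)) ^ (-(h : ℂ)) = ((2 * (Real.pi : ℂ)) ^ h)⁻¹ := by
    rw [cpow_neg, cpow_natCast]
  have hGamma : Complex.Gamma (h : ℂ) = (Nat.factorial (h - 1) : ℂ) := by
    rw [show (h : ℂ) = ((h - 1 : ℕ) : ℂ) + 1 by push_cast [Nat.cast_sub (by omega : 1 ≤ h)]; ring]
    exact Complex.Gamma_nat_eq_factorial (h - 1)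
  rw [hNpow, h2pow, hGamma]

/-- Let `g : ℤ/Nℤ → ℂ` and `h ≥ 2`.  Then
`N·L(1-h, g) = C_{N,h}⁻¹·L(h, ĝ + (-1)^h·ĝ⁻)` and `L(1-h, g) = (-1)^h·L(1-h, g⁻)`. -/
theorem statement17 (N : ℕ) [NeZero N] (g : ZMod N → ℂ) (h : ℕ) (hh : 2 ≤ h)
    (L : (ZMod N → ℂ) → ℂ → ℂ) (hL : IsLSeries N L) :
    (N : ℂ) * L g (1 - (h : ℂ)) =
      (CN N h)⁻¹ * L (fun x => fhat N g x + (-1 : ℂ) ^ h * fhat N g (-x)) (h : ℂ) ∧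
    L g (1 - (h : ℂ)) = (-1 : ℂ) ^ h * L (fun x => g (-x)) (1 - (h : ℂ)) := by
  have hh1 : (1 - (h : ℂ)) ≠ 1 := by
    intro hc
    have h0 : (h : ℂ) = ((0 : ℕ) : ℂ) := by push_cast; linear_combination -hc
    have := Nat.cast_injective h0
    omega
  have hhe : (h : ℂ) ≠ 1 := by
    intro hc
    have h0 : (h : ℂ) = ((1 : ℕ) : ℂ) := by simpa using hc
    have := Nat.cast_injective h0
    omega
  have hkey := LF_one_sub g hh
  have hkey' := LF_one_sub (fun x => g (-x)) hh
  have hgg : (fun x => g (-(-x))) = g := by funext x; rw [neg_neg]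
  rw [hgg] at hkey'
  have hfun : (fun x => fhat N g x + (-1 : ℂ) ^ h * fhat N g (-x))
      = (fun x => ZMod.dft g x + (-1 : ℂ) ^ h * ZMod.dft (fun y => g (-y)) x) := by
    funext x
    rw [fhat_eq, ZMod.dft_comp_neg]
  have hLrhs : L (fun x => fhat N g x + (-1 : ℂ) ^ h * fhat N g (-x)) (h : ℂ)
      = ZMod.LFunction (ZMod.dft g) (h : ℂ)
        + (-1 : ℂ) ^ h * ZMod.LFunction (ZMod.dft fun x => g (-x)) (h : ℂ) := by
    rw [hfun, L_eq hL _ hhe, LFunction_add_smul]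
  -- notation for the ring manipulations
  have e1 : (I : ℂ) ^ h * I ^ h = (-1 : ℂ) ^ h := by rw [← mul_pow, Complex.I_mul_I]
  have e2 : ((-1 : ℂ)) ^ h * (-1 : ℂ) ^ h = 1 := by rw [← mul_pow]; norm_num
  have hA : ((2 * (Real.pi : ℂ)) ^ h) ≠ 0 := by
    apply pow_ne_zero
    simp [Real.pi_ne_zero]
  have hNp : (N : ℂ) * (N : ℂ) ^ (h - 1 : ℕ) = (N : ℂ) ^ h := by
    rw [← pow_succ']
    congr 1
    omega
  have hCN : (CN N h)⁻¹
      = ((N : ℂ) ^ h * (Nat.factorial (h - 1) : ℂ))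
        / ((-1 : ℂ) ^ h * (2 * (Real.pi : ℂ)) ^ h * I ^ h) := by
    rw [CN, inv_div]
    congr 1
    rw [show -(2 * (Real.pi : ℂ) * I) = (-1) * (2 * (Real.pi : ℂ)) * I by ring,
      mul_pow, mul_pow]
  have hden : ((-1 : ℂ) ^ h * (2 * (Real.pi : ℂ)) ^ h * I ^ h) ≠ 0 := by
    apply mul_ne_zero (mul_ne_zero (pow_ne_zero _ (by norm_num)) hA)
    exact pow_ne_zero _ Complex.I_ne_zero
  have hcoef : (N : ℂ) * ((N : ℂ) ^ (h - 1 : ℕ) * (((2 * (Real.pi : ℂ)) ^ h)⁻¹)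
        * (Nat.factorial (h - 1) : ℂ)) * I ^ h = (CN N h)⁻¹ := by
    rw [hCN, eq_div_iff hden, ← hNp]
    have eA : (((2 * (Real.pi : ℂ)) ^ h)⁻¹) * ((2 * (Real.pi : ℂ)) ^ h) = 1 :=
      inv_mul_cancel₀ hA
    linear_combination ((N : ℂ) * (N : ℂ) ^ (h - 1 : ℕ) * (Nat.factorial (h - 1) : ℂ))
        * ((-1 : ℂ) ^ h * I ^ h * I ^ h * eA + (-1 : ℂ) ^ h * e1 + e2)
  constructor
  · rw [L_eq hL g hh1, hkey, hLrhs, ← hcoef]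
    ring
  · rw [L_eq hL g hh1, L_eq hL _ hh1, hkey, hkey']
    linear_combination (-((N : ℂ) ^ (h - 1 : ℕ) * (((2 * (Real.pi : ℂ)) ^ h)⁻¹)
        * (Nat.factorial (h - 1) : ℂ) * I ^ h
        * ZMod.LFunction (ZMod.dft g) (h : ℂ))) * e2
end
end

section
/- Let g : ℤ/Nℤ → ℂ, and define L*(1, g) := lim_{s→1} (L(s, g) − ĝ(0)/(N·(s−1))). Then L(0, ĝ) + ĝ(0)/2 = C_{N,1}^{−1}·(L*(1, g⁻) − L*(1, g)); moreover L(0, g + g⁻) = −g(0) and L(0, g − g⁻) = 2·L(0, g) + g(0). -/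
noncomputable section

open Filter Complex

lemma eChar_eq_stdAddChar (N : ℕ) [NeZero N] (x : ZMod N) : eChar N x = ZMod.stdAddChar x := by
  have h := ZMod.stdAddChar_coe (N := N) (x.val : ℤ)
  rw [show ((x.val : ℤ) : ZMod N) = x by simp [ZMod.natCast_val]] at h
  rw [eChar, h]
  push_cast
  ring_nf

lemma fhat_eq_dft (N : ℕ) [NeZero N] (g : ZMod N → ℂ) : fhat N g = ZMod.dft g := by
  funext n
  rw [ZMod.dft_apply, fhat]
  exact Finset.sum_congr rfl fun a _ => by rw [eChar_eq_stdAddChar, smul_eq_mul, mul_comm]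

lemma fhat_zero_eq_sum (N : ℕ) [NeZero N] (f : ZMod N → ℂ) : fhat N f 0 = ∑ a, f a := by
  simp [fhat, eChar, ZMod.val_zero]

lemma LFun_add (N : ℕ) [NeZero N] (f h : ZMod N → ℂ) (s : ℂ) :
    ZMod.LFunction (fun x => f x + h x) s = ZMod.LFunction f s + ZMod.LFunction h s := by
  simp only [ZMod.LFunction, Finset.mul_sum, ← Finset.sum_add_distrib]
  exact Finset.sum_congr rfl fun j _ => by ring

lemma LFun_const_mul (N : ℕ) [NeZero N] (a : ℂ) (f : ZMod N → ℂ) (s : ℂ) :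
    ZMod.LFunction (fun x => a * f x) s = a * ZMod.LFunction f s := by
  simp only [ZMod.LFunction, Finset.mul_sum]
  exact Finset.sum_congr rfl fun j _ => by ring

lemma exp_pi_I_half : Complex.exp ((Real.pi : ℂ) * Complex.I / 2) = Complex.I := by
  have h : ((Real.pi : ℂ) * Complex.I / 2) = ((Real.pi / 2 : ℝ) : ℂ) * Complex.I := by
    push_cast; ring
  rw [h, Complex.exp_mul_I, ← Complex.ofReal_cos, ← Complex.ofReal_sin,
    Real.cos_pi_div_two, Real.sin_pi_div_two]
  simp

lemma exp_neg_pi_I_half : Complex.exp (-(Real.pi : ℂ) * Complex.I / 2) = -Complex.I := by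
  have h : (-(Real.pi : ℂ) * Complex.I / 2) = ((-(Real.pi / 2) : ℝ) : ℂ) * Complex.I := by
    push_cast; ring
  rw [h, Complex.exp_mul_I, ← Complex.ofReal_cos, ← Complex.ofReal_sin,
    Real.cos_neg, Real.sin_neg, Real.cos_pi_div_two, Real.sin_pi_div_two]
  simp

lemma abstract_eq (N : ℕ) [NeZero N] (L : (ZMod N → ℂ) → ℂ → ℂ) (hL : IsLSeries N L)
    (f : ZMod N → ℂ) {s : ℂ} (hs : s ≠ 1) : L f s = ZMod.LFunction f s := by
  have hagree : ∀ z : ℂ, 1 < z.re → L f z = ZMod.LFunction f z := by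
    intro z hz
    have h1 := hL.1 f z hz
    have h2 : HasSum (fun n : ℕ => LSeries.term (f ·) z (n + 1)) (L f z) := by
      refine h1.congr_fun fun n => ?_
      rw [LSeries.term_of_ne_zero (Nat.succ_ne_zero n), cpow_neg, div_eq_mul_inv]
    have h3 : HasSum (fun n : ℕ => LSeries.term (f ·) z n) (L f z) := by
      have := (hasSum_nat_add_iff (f := fun n => LSeries.term (f ·) z n) 1).mp h2
      simpa [LSeries.term_zero] using this
    rw [ZMod.LFunction_eq_LSeries f hz, LSeries, h3.tsum_eq]
  let U : Set ℂ := {z | z ≠ 1}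
  have hUo : IsOpen U := isOpen_compl_singleton
  have hf : AnalyticOnNhd ℂ (L f) U :=
    DifferentiableOn.analyticOnNhd (fun u hu => (hL.2.1 f u hu).differentiableWithinAt) hUo
  have hg : AnalyticOnNhd ℂ (ZMod.LFunction f) U :=
    DifferentiableOn.analyticOnNhd
      (fun u hu => (ZMod.differentiableAt_LFunction f u (Or.inl hu)).differentiableWithinAt) hUo
  have hUc : IsPreconnected U :=
    (isConnected_compl_singleton_of_one_lt_rank (by simp) (1 : ℂ)).isPreconnected
  have hmem2 : (2 : ℂ) ∈ U := by norm_num [U]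
  refine hf.eqOn_of_preconnected_of_eventuallyEq hg hUc hmem2 ?_ hs
  have hV : {z : ℂ | 1 < z.re} ∈ nhds (2 : ℂ) :=
    (continuous_re.isOpen_preimage _ isOpen_Ioi).mem_nhds (by simp)
  filter_upwards [hV] with z hz using hagree z hz

/-- Let `g : ℤ/Nℤ → ℂ` and let
`L*(1, f) := lim_{s→1} (L(s, f) - f̂(0)/(N·(s-1)))`.  Then
`L(0, ĝ) + ĝ(0)/2 = C_{N,1}⁻¹·(L*(1, g⁻) - L*(1, g))`; moreover
`L(0, g + g⁻) = -g(0)` and `L(0, g - g⁻) = 2·L(0, g) + g(0)`. -/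
theorem statement18 (N : ℕ) [NeZero N] (g : ZMod N → ℂ)
    (L : (ZMod N → ℂ) → ℂ → ℂ) (hL : IsLSeries N L)
    (Lstar : (ZMod N → ℂ) → ℂ)
    (hLstar : ∀ f : ZMod N → ℂ,
      Tendsto (fun s : ℂ => L f s - fhat N f 0 / ((N : ℂ) * (s - 1)))
        (nhdsWithin 1 {(1 : ℂ)}ᶜ) (nhds (Lstar f))) :
    L (fhat N g) 0 + fhat N g 0 / 2 =
      (CN N 1)⁻¹ * (Lstar (fun x => g (-x)) - Lstar g) ∧
    L (fun x => g x + g (-x)) 0 = -g 0 ∧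
    L (fun x => g x - g (-x)) 0 = 2 * L g 0 + g 0 := by
  have hNe : (N : ℂ) ≠ 0 := Nat.cast_ne_zero.mpr (NeZero.ne N)
  have hπ : ((Real.pi : ℝ) : ℂ) ≠ 0 := ofReal_ne_zero.mpr Real.pi_ne_zero
  have hL0 : ∀ f : ZMod N → ℂ, L f 0 = ZMod.LFunction f 0 := fun f =>
    abstract_eq N L hL f (by norm_num)
  -- Part 2
  have heven : Function.Even (fun x : ZMod N => g x + g (-x)) := fun x => by
    simp only [neg_neg]; exact add_comm _ _
  have h2 : L (fun x => g x + g (-x)) 0 = -g 0 := by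
    rw [hL0, ZMod.LFunction_apply_zero_of_even heven]
    simp only [neg_zero]
    ring
  -- Part 3
  have hcomb : ZMod.LFunction (fun x : ZMod N => g x - g (-x)) 0
      = 2 * ZMod.LFunction g 0 - ZMod.LFunction (fun x : ZMod N => g x + g (-x)) 0 := by
    have hadd := LFun_add N (fun x => g x - g (-x)) (fun x => g x + g (-x)) 0
    rw [show (fun x : ZMod N => (g x - g (-x)) + (g x + g (-x))) = fun x : ZMod N => 2 * g x by
      funext x; ring, LFun_const_mul] at hadd
    linear_combination -hadd
  have h3 : L (fun x => g x - g (-x)) 0 = 2 * L g 0 + g 0 := by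
    have h2' := h2
    rw [hL0] at h2'
    rw [hL0, hcomb, ← hL0 g, h2']
    ring
  -- Part 1
  set gneg : ZMod N → ℂ := fun x => g (-x) with hgneg
  set c : ℂ := fhat N g 0 with hc
  have hcneg : fhat N gneg 0 = c := by
    rw [fhat_zero_eq_sum, hc, fhat_zero_eq_sum]
    exact Fintype.sum_equiv (Equiv.neg _) _ _ fun a => rfl
  have hEg : Tendsto (fun s : ℂ => ZMod.LFunction g s - c / ((N : ℂ) * (s - 1)))
      (nhdsWithin 1 {(1 : ℂ)}ᶜ) (nhds (Lstar g)) := by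
    refine Tendsto.congr' ?_ (hLstar g)
    filter_upwards [self_mem_nhdsWithin] with s hs
    rw [abstract_eq N L hL g hs]
  have hEgneg : Tendsto (fun s : ℂ => ZMod.LFunction gneg s - c / ((N : ℂ) * (s - 1)))
      (nhdsWithin 1 {(1 : ℂ)}ᶜ) (nhds (Lstar gneg)) := by
    refine Tendsto.congr' ?_ (hLstar gneg)
    filter_upwards [self_mem_nhdsWithin] with s hs
    rw [abstract_eq N L hL gneg hs, hcneg]
  have hexpP : Tendsto (fun s : ℂ => cexp ((Real.pi : ℂ) * I * s / 2))
      (nhdsWithin 1 {(1 : ℂ)}ᶜ) (nhds I) := by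
    have hco : Continuous fun s : ℂ => cexp ((Real.pi : ℂ) * I * s / 2) := by fun_prop
    have h := (hco.tendsto 1).mono_left (nhdsWithin_le_nhds (s := {(1 : ℂ)}ᶜ))
    rwa [show (Real.pi : ℂ) * I * 1 / 2 = (Real.pi : ℂ) * I / 2 by ring, exp_pi_I_half] at h
  have hexpM : Tendsto (fun s : ℂ => cexp (-(Real.pi : ℂ) * I * s / 2))
      (nhdsWithin 1 {(1 : ℂ)}ᶜ) (nhds (-I)) := by
    have hco : Continuous fun s : ℂ => cexp (-(Real.pi : ℂ) * I * s / 2) := by fun_prop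
    have h := (hco.tendsto 1).mono_left (nhdsWithin_le_nhds (s := {(1 : ℂ)}ᶜ))
    rwa [show -(Real.pi : ℂ) * I * 1 / 2 = -(Real.pi : ℂ) * I / 2 by ring,
      exp_neg_pi_I_half] at h
  have hB : Tendsto (fun s : ℂ => (N : ℂ) *
      (cexp ((Real.pi : ℂ) * I * s / 2) * (ZMod.LFunction gneg s - c / ((N : ℂ) * (s - 1)))
        + cexp (-(Real.pi : ℂ) * I * s / 2) * (ZMod.LFunction g s - c / ((N : ℂ) * (s - 1)))))
      (nhdsWithin 1 {(1 : ℂ)}ᶜ)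
      (nhds ((N : ℂ) * (I * Lstar gneg + -I * Lstar g))) :=
    tendsto_const_nhds.mul ((hexpP.mul hEgneg).add (hexpM.mul hEg))
  -- derivative for the C-term
  have hder : HasDerivAt
      (fun s : ℂ => cexp ((Real.pi : ℂ) * I * s / 2) + cexp (-(Real.pi : ℂ) * I * s / 2))
      (-(Real.pi : ℂ)) 1 := by
    have h0 : HasDerivAt (fun s : ℂ => (Real.pi : ℂ) * I * s / 2) ((Real.pi : ℂ) * I / 2) 1 := by
      simpa using ((hasDerivAt_id (1 : ℂ)).const_mul ((Real.pi : ℂ) * I)).div_const 2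
    have h0' : HasDerivAt (fun s : ℂ => -(Real.pi : ℂ) * I * s / 2)
        (-(Real.pi : ℂ) * I / 2) 1 := by
      simpa using ((hasDerivAt_id (1 : ℂ)).const_mul (-(Real.pi : ℂ) * I)).div_const 2
    have h := (h0.cexp).add (h0'.cexp)
    have hval : cexp ((Real.pi : ℂ) * I * 1 / 2) * ((Real.pi : ℂ) * I / 2)
        + cexp (-(Real.pi : ℂ) * I * 1 / 2) * (-(Real.pi : ℂ) * I / 2) = -(Real.pi : ℂ) := by
      rw [show (Real.pi : ℂ) * I * 1 / 2 = (Real.pi : ℂ) * I / 2 by ring,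
        show -(Real.pi : ℂ) * I * 1 / 2 = -(Real.pi : ℂ) * I / 2 by ring,
        exp_pi_I_half, exp_neg_pi_I_half]
      linear_combination (Real.pi : ℂ) * Complex.I_sq
    rw [hval] at h
    exact h
  have hC0 : Tendsto (fun s : ℂ =>
      (cexp ((Real.pi : ℂ) * I * s / 2) + cexp (-(Real.pi : ℂ) * I * s / 2)) / (s - 1))
      (nhdsWithin 1 {(1 : ℂ)}ᶜ) (nhds (-(Real.pi : ℂ))) := by
    have h := hasDerivAt_iff_tendsto_slope.mp hder
    refine Tendsto.congr' ?_ h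
    filter_upwards [self_mem_nhdsWithin] with s hs
    rw [slope_def_field]
    rw [show cexp ((Real.pi : ℂ) * I * 1 / 2) + cexp (-(Real.pi : ℂ) * I * 1 / 2) = 0 by
      rw [show (Real.pi : ℂ) * I * 1 / 2 = (Real.pi : ℂ) * I / 2 by ring,
        show -(Real.pi : ℂ) * I * 1 / 2 = -(Real.pi : ℂ) * I / 2 by ring,
        exp_pi_I_half, exp_neg_pi_I_half]; ring, sub_zero]
  have hC : Tendsto (fun s : ℂ => c *
      ((cexp ((Real.pi : ℂ) * I * s / 2) + cexp (-(Real.pi : ℂ) * I * s / 2)) / (s - 1)))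
      (nhdsWithin 1 {(1 : ℂ)}ᶜ) (nhds (c * -(Real.pi : ℂ))) :=
    tendsto_const_nhds.mul hC0
  have hA : Tendsto (fun s : ℂ => (N : ℂ) ^ (s - 1) * (2 * (Real.pi : ℂ)) ^ (-s)
        * Complex.Gamma s)
      (nhdsWithin 1 {(1 : ℂ)}ᶜ)
      (nhds ((N : ℂ) ^ ((1 : ℂ) - 1) * (2 * (Real.pi : ℂ)) ^ (-(1 : ℂ)) * Complex.Gamma 1)) := by
    have c1 : ContinuousAt (fun s : ℂ => (N : ℂ) ^ (s - 1)) 1 :=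
      (continuousAt_const_cpow hNe).comp ((continuous_id.sub continuous_const).continuousAt)
    have c2 : ContinuousAt (fun s : ℂ => (2 * (Real.pi : ℂ)) ^ (-s)) 1 :=
      (continuousAt_const_cpow (mul_ne_zero two_ne_zero hπ)).comp (continuous_neg.continuousAt)
    have c3 : ContinuousAt Complex.Gamma 1 := by
      refine (Complex.differentiableAt_Gamma 1 fun m => ?_).continuousAt
      intro hcon
      have h := congrArg Complex.re hcon
      simp only [one_re, neg_re, natCast_re] at h
      linarith [Nat.cast_nonneg (α := ℝ) m]
    exact (((c1.mul c2).mul c3).tendsto).mono_left nhdsWithin_le_nhds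
  have hfe : (fun s : ℂ => ((N : ℂ) ^ (s - 1) * (2 * (Real.pi : ℂ)) ^ (-s) * Complex.Gamma s) *
        (((N : ℂ) *
          (cexp ((Real.pi : ℂ) * I * s / 2) * (ZMod.LFunction gneg s - c / ((N : ℂ) * (s - 1)))
            + cexp (-(Real.pi : ℂ) * I * s / 2)
              * (ZMod.LFunction g s - c / ((N : ℂ) * (s - 1)))))
          + c * ((cexp ((Real.pi : ℂ) * I * s / 2) + cexp (-(Real.pi : ℂ) * I * s / 2))
              / (s - 1))))
      =ᶠ[nhdsWithin 1 {(1 : ℂ)}ᶜ] fun s => ZMod.LFunction (fhat N g) (1 - s) := by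
    have hop : ∀ᶠ s : ℂ in nhdsWithin 1 {(1 : ℂ)}ᶜ, 0 < s.re :=
      eventually_nhdsWithin_of_eventually_nhds
        ((isOpen_lt continuous_const continuous_re).eventually_mem (by norm_num))
    filter_upwards [hop, self_mem_nhdsWithin] with s hre hs1
    have hs1' : s ≠ 1 := hs1
    have hsm : s - 1 ≠ 0 := sub_ne_zero.mpr hs1'
    have hsn : ∀ n : ℕ, s ≠ -(n : ℂ) := by
      intro n hcon
      rw [hcon] at hre
      simp only [neg_re, natCast_re] at hre
      linarith [Nat.cast_nonneg (α := ℝ) n]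
    have h1 := ZMod.LFunction_one_sub (ZMod.dft g) hsn (Or.inr hs1')
    have e1 : ZMod.dft (ZMod.dft g) = fun j : ZMod N => (N : ℂ) * gneg j := by
      funext j
      rw [congrFun (ZMod.dft_dft g) j]
      simp [hgneg, smul_eq_mul]
    have e2 : (ZMod.dft fun x : ZMod N => ZMod.dft g (-x)) = fun k : ZMod N => (N : ℂ) * g k := by
      rw [ZMod.dft_comp_neg (ZMod.dft g)]
      funext k
      rw [congrFun e1 (-k)]
      simp [hgneg]
    rw [e1, e2, LFun_const_mul, LFun_const_mul] at h1
    rw [fhat_eq_dft, h1]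
    field_simp
    ring
  have hRHS : Tendsto (fun s : ℂ => ZMod.LFunction (fhat N g) (1 - s))
      (nhdsWithin 1 {(1 : ℂ)}ᶜ)
      (nhds (((N : ℂ) ^ ((1 : ℂ) - 1) * (2 * (Real.pi : ℂ)) ^ (-(1 : ℂ)) * Complex.Gamma 1) *
        ((N : ℂ) * (I * Lstar gneg + -I * Lstar g) + c * -(Real.pi : ℂ)))) :=
    Tendsto.congr' hfe (hA.mul (hB.add hC))
  have hLHS : Tendsto (fun s : ℂ => ZMod.LFunction (fhat N g) (1 - s))
      (nhdsWithin 1 {(1 : ℂ)}ᶜ) (nhds (ZMod.LFunction (fhat N g) 0)) := by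
    have hcont : ContinuousAt (ZMod.LFunction (fhat N g)) 0 :=
      (ZMod.differentiableAt_LFunction _ 0 (Or.inl (by norm_num))).continuousAt
    have hsub : Tendsto (fun s : ℂ => 1 - s) (nhdsWithin 1 {(1 : ℂ)}ᶜ) (nhds 0) := by
      have hco : Continuous fun s : ℂ => 1 - s := by fun_prop
      have h := (hco.tendsto 1).mono_left (nhdsWithin_le_nhds (s := {(1 : ℂ)}ᶜ))
      simpa using h
    exact hcont.tendsto.comp hsub
  have hkey := tendsto_nhds_unique hLHS hRHS
  have hCN : (CN N 1)⁻¹ = (N : ℂ) * I / (2 * (Real.pi : ℂ)) := by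
    refine inv_eq_of_mul_eq_one_right ?_
    rw [CN]
    norm_num [Nat.factorial]
    field_simp
    linear_combination (-1 : ℂ) * Complex.I_sq
  refine ⟨?_, h2, h3⟩
  rw [hL0, hkey, hCN, sub_self, cpow_zero, Complex.Gamma_one, cpow_neg, cpow_one]
  field_simp
  ring
end
end
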